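/- Fix β > 0 and S ⊆ 𝕊^{n−1}. There exists a deterministic set 𝒩 ⊆ S + 2β·B₂ⁿ of cardinality at most (2n+2)·N(S, βB₂ⁿ) such that for every m ∈ ℕ and every m×n real matrix A, and for every v ∈ S, there exists w ∈ 𝒩 with ‖A(v − w)‖ ≤ β·(2‖A restricted to H‖_op + ‖A‖_op/n), where H = {x ∈ ℝⁿ : x₁ + ... + xₙ = 0}. -/

import Mathlib

open Finset

/-- Euclidean norm on `ℝᵏ`. -/
noncomputable def enorm' {k : ℕ} (y : Fin k → ℝ) : ℝ := Real.sqrt (∑ i, (y i)^2)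

/-- Operator norm of `A` restricted to unit vectors in `H`. -/
noncomputable def opNormOn {m n : ℕ} (A : Matrix (Fin m) (Fin n) ℝ)
    (H : Set (Fin n → ℝ)) : ℝ :=
  sSup {r : ℝ | ∃ x ∈ H, enorm' x = 1 ∧ r = enorm' (A.mulVec x)}

/-- Covering number `N(S, βB₂ⁿ)`: least number of Euclidean balls of radius `β`
needed to cover `S`. -/
noncomputable def coveringNumber {n : ℕ} (S : Set (Fin n → ℝ)) (β : ℝ) : ℕ :=
  sInf {k : ℕ | ∃ F : Finset (Fin n → ℝ), F.card = k ∧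
    ∀ x ∈ S, ∃ c ∈ F, enorm' (x - c) ≤ β}

open scoped RealInnerProductSpace

noncomputable def toE {k : ℕ} (y : Fin k → ℝ) : EuclideanSpace ℝ (Fin k) :=
  (WithLp.equiv 2 _).symm y

lemma toE_sub {k : ℕ} (x y : Fin k → ℝ) : toE (x - y) = toE x - toE y := rfl
lemma toE_add {k : ℕ} (x y : Fin k → ℝ) : toE (x + y) = toE x + toE y := rfl
lemma toE_smul {k : ℕ} (c : ℝ) (x : Fin k → ℝ) : toE (c • x) = c • toE x := rfl
lemma toE_inj {k : ℕ} {x y : Fin k → ℝ} (h : toE x = toE y) : x = y := congrArg WithLp.ofLp h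
lemma toE_zero {k : ℕ} : toE (0 : Fin k → ℝ) = 0 := rfl

lemma enorm'_eq {k : ℕ} (y : Fin k → ℝ) : enorm' y = ‖toE y‖ := by
  rw [EuclideanSpace.norm_eq, enorm']
  simp [toE, Real.norm_eq_abs, sq_abs]

lemma enorm'_nonneg {k : ℕ} (y : Fin k → ℝ) : 0 ≤ enorm' y := Real.sqrt_nonneg _

lemma enorm'_triangle {k : ℕ} (x y : Fin k → ℝ) :
    enorm' (x + y) ≤ enorm' x + enorm' y := by
  rw [enorm'_eq, enorm'_eq, enorm'_eq, toE_add]; exact norm_add_le _ _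

lemma enorm'_smul {k : ℕ} (c : ℝ) (x : Fin k → ℝ) :
    enorm' (c • x) = |c| * enorm' x := by
  rw [enorm'_eq, enorm'_eq, toE_smul, norm_smul, Real.norm_eq_abs]

lemma enorm'_sub_rev {k : ℕ} (x y : Fin k → ℝ) : enorm' (x - y) = enorm' (y - x) := by
  rw [enorm'_eq, enorm'_eq, toE_sub, toE_sub, norm_sub_rev]

/-- mulVec as a CLM between Euclidean spaces. -/
noncomputable def clm {m n : ℕ} (A : Matrix (Fin m) (Fin n) ℝ) :
    EuclideanSpace ℝ (Fin n) →L[ℝ] EuclideanSpace ℝ (Fin m) :=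
  LinearMap.toContinuousLinearMap
    { toFun := fun x => toE (A.mulVec ((WithLp.equiv 2 _) x))
      map_add' := fun x y => by simp [Matrix.mulVec_add, toE]
      map_smul' := fun c x => by simp [Matrix.mulVec_smul, toE] }

lemma clm_apply {m n : ℕ} (A : Matrix (Fin m) (Fin n) ℝ) (x : Fin n → ℝ) :
    clm A (toE x) = toE (A.mulVec x) := rfl

lemma mulVec_le {m n : ℕ} (A : Matrix (Fin m) (Fin n) ℝ) (x : Fin n → ℝ) :
    enorm' (A.mulVec x) ≤ ‖clm A‖ * enorm' x := by
  rw [enorm'_eq, enorm'_eq, ← clm_apply]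
  exact (clm A).le_opNorm _

lemma bddAbove_set {m n : ℕ} (A : Matrix (Fin m) (Fin n) ℝ) (H : Set (Fin n → ℝ)) :
    BddAbove {r : ℝ | ∃ x ∈ H, enorm' x = 1 ∧ r = enorm' (A.mulVec x)} := by
  refine ⟨‖clm A‖, fun r hr => ?_⟩
  obtain ⟨x, _, hx1, rfl⟩ := hr
  calc enorm' (A.mulVec x) ≤ ‖clm A‖ * enorm' x := mulVec_le A x
    _ = ‖clm A‖ := by rw [hx1, mul_one]

lemma opNormOn_nonneg {m n : ℕ} (A : Matrix (Fin m) (Fin n) ℝ) (H : Set (Fin n → ℝ)) :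
    0 ≤ opNormOn A H := by
  apply Real.sSup_nonneg
  rintro r ⟨x, _, _, rfl⟩
  exact Real.sqrt_nonneg _

lemma le_opNormOn {m n : ℕ} (A : Matrix (Fin m) (Fin n) ℝ) (H : Set (Fin n → ℝ))
    (x : Fin n → ℝ) (hx : x ∈ H) (hx1 : enorm' x = 1) :
    enorm' (A.mulVec x) ≤ opNormOn A H :=
  le_csSup (bddAbove_set A H) ⟨x, hx, hx1, rfl⟩

lemma mulVec_le_opNormOn {m n : ℕ} (A : Matrix (Fin m) (Fin n) ℝ)
    (H : Set (Fin n → ℝ)) (hH : ∀ (c : ℝ) (x : Fin n → ℝ), x ∈ H → c • x ∈ H)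
    (h : Fin n → ℝ) (hh : h ∈ H) :
    enorm' (A.mulVec h) ≤ opNormOn A H * enorm' h := by
  rcases eq_or_ne h 0 with rfl | hne
  · simp [Matrix.mulVec_zero, enorm']
  · set c := enorm' h with hc
    have hcpos : 0 < c := by
      rw [hc, enorm'_eq]
      exact norm_pos_iff.mpr (fun h0 => hne (toE_inj (by rw [h0, toE_zero])))
    have hx1 : enorm' (c⁻¹ • h) = 1 := by
      rw [enorm'_eq, toE_smul, norm_smul, ← enorm'_eq, ← hc]
      rw [Real.norm_eq_abs, abs_inv, abs_of_pos hcpos]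
      exact inv_mul_cancel₀ hcpos.ne'
    have key := le_opNormOn A H (c⁻¹ • h) (hH c⁻¹ h hh) hx1
    rw [A.mulVec_smul] at key
    have hrw : enorm' (c⁻¹ • A.mulVec h) = c⁻¹ * enorm' (A.mulVec h) := by
      rw [enorm'_eq, toE_smul, norm_smul, ← enorm'_eq]
      rw [Real.norm_eq_abs, abs_inv, abs_of_pos hcpos]
    rw [hrw] at key
    calc enorm' (A.mulVec h) = c * (c⁻¹ * enorm' (A.mulVec h)) := by
          rw [← mul_assoc, mul_inv_cancel₀ hcpos.ne', one_mul]
      _ ≤ c * opNormOn A H := mul_le_mul_of_nonneg_left key hcpos.le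
      _ = opNormOn A H * c := mul_comm _ _

lemma cover_exists (n : ℕ) (β : ℝ) (hβ : 0 < β) (S : Set (Fin n → ℝ))
    (hS : ∀ x ∈ S, enorm' x = 1) :
    ∃ F : Finset (Fin n → ℝ), ∀ x ∈ S, ∃ c ∈ F, enorm' (x - c) ≤ β := by
  set S' : Set (EuclideanSpace ℝ (Fin n)) := toE '' S with hS'
  have hsub : S' ⊆ Metric.closedBall 0 1 := by
    rintro _ ⟨x, hx, rfl⟩
    simp only [Metric.mem_closedBall, dist_zero_right]
    rw [← enorm'_eq]
    exact (hS x hx).le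
  have htb : TotallyBounded S' :=
    (isCompact_closedBall (0 : EuclideanSpace ℝ (Fin n)) 1).totallyBounded.subset hsub
  rw [Metric.totallyBounded_iff] at htb
  obtain ⟨t, htfin, hcov⟩ := htb β hβ
  refine ⟨htfin.toFinset.image (WithLp.equiv 2 _), fun x hx => ?_⟩
  have : toE x ∈ S' := ⟨x, hx, rfl⟩
  obtain ⟨y, hyt, hxy⟩ := Set.mem_iUnion₂.mp (hcov this)
  refine ⟨(WithLp.equiv 2 _) y, Finset.mem_image_of_mem _ (htfin.mem_toFinset.mpr hyt), ?_⟩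
  rw [enorm'_eq, toE_sub]
  have : toE ((WithLp.equiv 2 (Fin n → ℝ)) y) = y := rfl
  rw [this, ← dist_eq_norm]
  exact (Metric.mem_ball.mp hxy).le

/-- grid rounding -/
lemma grid_round (n : ℕ) (hn : 0 < n) (β : ℝ) (hβ : 0 < β) (t : ℝ)
    (ht : |t| ≤ β) :
    ∃ k ∈ Finset.range (2*n+1), |t - (-β + k * (β/n))| ≤ β/n := by
  have hnR : (0:ℝ) < n := Nat.cast_pos.mpr hn
  set x : ℝ := (t + β) * n / β with hx
  have hx0 : 0 ≤ x := by
    apply div_nonneg _ hβ.le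
    have : -β ≤ t := (abs_le.mp ht).1
    nlinarith
  have hx2 : x ≤ 2*n := by
    have : t ≤ β := (abs_le.mp ht).2
    rw [hx, div_le_iff₀ hβ]
    nlinarith
  set k := ⌊x⌋₊ with hk
  have hk_le : (k:ℝ) ≤ x := Nat.floor_le hx0
  have hk_gt : x < k + 1 := Nat.lt_floor_add_one x
  have hk2n : k ≤ 2*n := by
    have : (k:ℝ) ≤ (2*n : ℕ) := by push_cast; linarith
    exact_mod_cast this
  refine ⟨k, Finset.mem_range.mpr (Nat.lt_succ_of_le hk2n), ?_⟩
  have key : t - (-β + k * (β/n)) = (x - k) * (β/n) := by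
    rw [hx]; field_simp; ring
  rw [key]
  have hnn : 0 ≤ (x - ↑k) * (β/n) := mul_nonneg (by linarith) (by positivity)
  rw [abs_of_nonneg hnn]
  exact mul_le_of_le_one_left (by positivity) (by linarith)

/-- Rounding lemma: a deterministic net `𝒩 ⊆ S + 2βB₂ⁿ` of cardinality at most
`(2n+2)·N(S, βB₂ⁿ)` such that for every `m × n` matrix `A` and every `v ∈ S`
there is `w ∈ 𝒩` with
`‖A(v−w)‖ ≤ β(2‖A|_H‖_op + ‖A‖_op/n)`, where `H = {x : Σ xᵢ = 0}`. -/
theorem stmt_10 (n : ℕ) (β : ℝ) (hβ : 0 < β) (S : Set (Fin n → ℝ))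
    (hS : ∀ x ∈ S, enorm' x = 1) :
    ∃ N : Finset (Fin n → ℝ),
      (∀ w ∈ N, ∃ v ∈ S, enorm' (w - v) ≤ 2 * β) ∧
      N.card ≤ (2 * n + 2) * coveringNumber S β ∧
      ∀ (m : ℕ) (A : Matrix (Fin m) (Fin n) ℝ), ∀ v ∈ S, ∃ w ∈ N,
        enorm' (A.mulVec (v - w))
          ≤ β * (2 * opNormOn A {x | ∑ i, x i = 0}
              + opNormOn A Set.univ / n) := by
  classical
  rcases Nat.eq_zero_or_pos n with rfl | hn
  · refine ⟨∅, by simp, by simp, fun m A v hv => ?_⟩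
    have := hS v hv
    simp [enorm'] at this
  -- main case n ≥ 1
  have hnR : (0:ℝ) < n := Nat.cast_pos.mpr hn
  have hsq : (0:ℝ) < Real.sqrt n := Real.sqrt_pos.mpr hnR
  obtain ⟨F₁, hF₁⟩ := cover_exists n β hβ S hS
  have hne : {k : ℕ | ∃ F : Finset (Fin n → ℝ), F.card = k ∧
      ∀ x ∈ S, ∃ c ∈ F, enorm' (x - c) ≤ β}.Nonempty := ⟨F₁.card, F₁, rfl, hF₁⟩
  obtain ⟨F₀, hcard, hcov⟩ := Nat.sInf_mem hne
  have hcard' : F₀.card = coveringNumber S β := hcard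
  set F' := F₀.filter (fun c => ∃ v ∈ S, enorm' (v - c) ≤ β) with hF'
  set u : Fin n → ℝ := fun _ => 1 / Real.sqrt n with hu
  have hu_norm : enorm' u = 1 := by
    rw [enorm']
    simp only [hu]
    rw [Finset.sum_const, Finset.card_univ, Fintype.card_fin]
    rw [div_pow, one_pow, Real.sq_sqrt hnR.le]
    rw [nsmul_eq_mul, mul_one_div, div_self hnR.ne']
    exact Real.sqrt_one
  set N : Finset (Fin n → ℝ) :=
    (F' ×ˢ Finset.range (2*n+1)).image
      (fun p => p.1 + (-β + p.2 * (β/n)) • u) with hN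
  have ht'_abs : ∀ k ∈ Finset.range (2*n+1), |(-β + (k:ℝ) * (β/n))| ≤ β := by
    intro k hk
    have hk' : (k:ℝ) ≤ 2*n := by
      have := Nat.lt_succ_iff.mp (Finset.mem_range.mp hk)
      exact_mod_cast this
    rw [abs_le]
    constructor
    · have : 0 ≤ (k:ℝ) * (β/n) := by positivity
      linarith
    · have : (k:ℝ) * (β/n) ≤ 2*n * (β/n) := by
        apply mul_le_mul_of_nonneg_right hk' (by positivity)
      have h2 : 2*(n:ℝ) * (β/n) = 2*β := by field_simp
      linarith
  refine ⟨N, ?_, ?_, ?_⟩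
  · -- near S
    intro w hw
    obtain ⟨p, hp, rfl⟩ := Finset.mem_image.mp hw
    obtain ⟨hp1, hp2⟩ := Finset.mem_product.mp hp
    obtain ⟨hc0, v, hvS, hvc⟩ := Finset.mem_filter.mp hp1
    refine ⟨v, hvS, ?_⟩
    have hrw : p.1 + (-β + (p.2:ℝ) * (β/n)) • u - v
        = (p.1 - v) + (-β + (p.2:ℝ) * (β/n)) • u := by module
    rw [hrw]
    calc enorm' ((p.1 - v) + (-β + (p.2:ℝ) * (β/n)) • u)
        ≤ enorm' (p.1 - v) + enorm' ((-β + (p.2:ℝ) * (β/n)) • u) := enorm'_triangle _ _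
      _ ≤ β + β := by
          apply add_le_add
          · rw [enorm'_sub_rev]; exact hvc
          · rw [enorm'_smul, hu_norm, mul_one]
            exact ht'_abs p.2 hp2
      _ = 2 * β := by ring
  · -- cardinality
    calc N.card ≤ (F' ×ˢ Finset.range (2*n+1)).card := Finset.card_image_le
      _ = F'.card * (2*n+1) := by rw [Finset.card_product, Finset.card_range]
      _ ≤ F₀.card * (2*n+1) := by
          apply Nat.mul_le_mul_right
          exact Finset.card_filter_le _ _
      _ ≤ (2*n+2) * coveringNumber S β := by
          rw [← hcard', mul_comm]
          exact Nat.mul_le_mul (by omega) le_rfl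
  · -- main approximation
    intro m A v hv
    obtain ⟨c, hcF₀, hvc⟩ := hcov v hv
    have hcF' : c ∈ F' := Finset.mem_filter.mpr ⟨hcF₀, v, hv, hvc⟩
    set d : Fin n → ℝ := v - c with hd
    set t : ℝ := ⟪toE d, toE u⟫ with htdef
    have hu_norm' : ‖toE u‖ = 1 := by rw [← enorm'_eq]; exact hu_norm
    have hd_le : ‖toE d‖ ≤ β := by rw [← enorm'_eq]; exact hvc
    have ht_abs : |t| ≤ β := by
      calc |t| ≤ ‖toE d‖ * ‖toE u‖ := abs_real_inner_le_norm _ _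
        _ = ‖toE d‖ := by rw [hu_norm', mul_one]
        _ ≤ β := hd_le
    set h : Fin n → ℝ := d - t • u with hh
    have hsum_h : ∑ i, h i = 0 := by
      have hinner : t = (∑ i, d i) * (1 / Real.sqrt n) := by
        rw [htdef, PiLp.inner_apply]
        simp only [RCLike.inner_apply, conj_trivial, toE, hu]
        rw [Finset.sum_mul]; exact Finset.sum_congr rfl (fun i _ => mul_comm _ _)
      have : ∑ i, h i = ∑ i, d i - t * ∑ i, (u i) := by
        simp [hh, Finset.sum_sub_distrib, Finset.mul_sum]
      rw [this]
      have hsum_u : ∑ i : Fin n, u i = Real.sqrt n := by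
        simp only [hu]
        rw [Finset.sum_const, Finset.card_univ, Fintype.card_fin, nsmul_eq_mul, mul_one_div]
        rw [div_eq_iff hsq.ne']
        exact (Real.mul_self_sqrt hnR.le).symm
      rw [hsum_u, hinner]
      rw [mul_assoc, one_div, inv_mul_cancel₀ hsq.ne', mul_one, sub_self]
    have hh_le : enorm' h ≤ β := by
      rw [enorm'_eq]
      have heq : toE h = toE d - t • toE u := by rw [hh, toE_sub, toE_smul]
      rw [heq]
      have hsq' : ‖toE d - t • toE u‖^2 = ‖toE d‖^2 - t^2 := by
        rw [norm_sub_sq_real]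
        rw [real_inner_smul_right, norm_smul, ← htdef]
        rw [Real.norm_eq_abs, mul_pow, sq_abs, hu_norm', one_pow, mul_one]
        ring
      have h1 : ‖toE d - t • toE u‖^2 ≤ β^2 := by
        rw [hsq']
        have : ‖toE d‖^2 ≤ β^2 := by nlinarith [norm_nonneg (toE d)]
        nlinarith
      nlinarith [norm_nonneg (toE d - t • toE u)]
    obtain ⟨k, hk_mem, hk_close⟩ := grid_round n hn β hβ t ht_abs
    set t' : ℝ := -β + (k:ℝ) * (β/n) with ht'
    set w : Fin n → ℝ := c + t' • u with hw
    have hwN : w ∈ N := by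
      apply Finset.mem_image.mpr
      exact ⟨(c, k), Finset.mem_product.mpr ⟨hcF', hk_mem⟩, rfl⟩
    refine ⟨w, hwN, ?_⟩
    have hdecomp : v - w = h + (t - t') • u := by
      rw [hw, hh, hd]; module
    rw [hdecomp, Matrix.mulVec_add, Matrix.mulVec_smul]
    have hH_cone : ∀ (a : ℝ) (x : Fin n → ℝ), x ∈ {x : Fin n → ℝ | ∑ i, x i = 0} →
        a • x ∈ {x : Fin n → ℝ | ∑ i, x i = 0} := by
      intro a x hx
      simp only [Set.mem_setOf_eq] at hx ⊢
      simp [← Finset.mul_sum, hx]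
    have hhH : h ∈ {x : Fin n → ℝ | ∑ i, x i = 0} := hsum_h
    have hAu : enorm' (A.mulVec u) ≤ opNormOn A Set.univ :=
      le_opNormOn A Set.univ u (Set.mem_univ u) hu_norm
    set opH := opNormOn A {x : Fin n → ℝ | ∑ i, x i = 0} with hopH
    set opU := opNormOn A Set.univ with hopU
    have hopH0 : 0 ≤ opH := opNormOn_nonneg A _
    have hopU0 : 0 ≤ opU := opNormOn_nonneg A _
    calc enorm' (A.mulVec h + (t - t') • A.mulVec u)
        ≤ enorm' (A.mulVec h) + enorm' ((t - t') • A.mulVec u) := enorm'_triangle _ _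
      _ = enorm' (A.mulVec h) + |t - t'| * enorm' (A.mulVec u) := by rw [enorm'_smul]
      _ ≤ opH * enorm' h + (β/n) * opU := by
          apply add_le_add
          · exact mulVec_le_opNormOn A _ hH_cone h hhH
          · exact mul_le_mul hk_close hAu (enorm'_nonneg _) (by positivity)
      _ ≤ opH * β + (β/n) * opU := by
          apply add_le_add_left
          exact mul_le_mul_of_nonneg_left hh_le hopH0
      _ ≤ β * (2 * opH + opU / n) := by
          rw [mul_add]
          apply add_le_add
          · nlinarith
          · rw [div_mul_eq_mul_div, mul_div_assoc]
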